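/- (Per-step empirical Brier decrease with a sufficiently fine grid.) Let c > 0 and let m be a positive integer with m ≥ √(d/(2c)). Let f : 𝒳 → [0,1]^d be a predictor, E ⊆ 𝒳 a measurable event with μ(E) > 0 under distribution D, φ = E_{(x,y)∼D}[y − f(x) | E], and φ̃ ∈ ℝ^d with |φ̃_j − φ_j| ≤ 1/(2m) for all j ∈ [d]. If ‖φ‖₂² · μ(E) > c, then the patched predictor f'(x) = proj_{[0,1]^d}(f(x) + φ̃·1_E(x)) satisfies B(f, D) − B(f', D) > c/2. In particular, with c = min{β², ηα²/(4d)} and Brier scores bounded in [0, d], any sequence of such patches has length at most 2d / min{β², ηα²/(4d)}. -/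

import Mathlib

open MeasureTheory
open scoped RealInnerProductSpace

/-- The Euclidean projection onto the cube `[0,1]^d` (coordinatewise clamping). -/
noncomputable def projCube {d : ℕ} (v : EuclideanSpace ℝ (Fin d)) :
    EuclideanSpace ℝ (Fin d) :=
  WithLp.toLp 2 (fun j => min 1 (max 0 (v j)))

lemma clamp_lip (a b : ℝ) : |min 1 (max 0 a) - min 1 (max 0 b)| ≤ |a - b| := by
  calc |min 1 (max 0 a) - min 1 (max 0 b)| ≤ max |(1:ℝ) - 1| |max 0 a - max 0 b| :=
        abs_min_sub_min_le_max _ _ _ _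
    _ = |max a 0 - max b 0| := by rw [max_comm (0:ℝ) a, max_comm (0:ℝ) b]; simp
    _ ≤ |a - b| := abs_max_sub_max_le_abs _ _ _

lemma euclid_normSq {d : ℕ} (v : EuclideanSpace ℝ (Fin d)) : ‖v‖^2 = ∑ j, (v j)^2 := by
  rw [EuclideanSpace.norm_eq, Real.sq_sqrt (by positivity)]
  simp [Real.norm_eq_abs, sq_abs]

lemma projCube_mem {d : ℕ} (v : EuclideanSpace ℝ (Fin d)) (j : Fin d) :
    projCube v j ∈ Set.Icc (0:ℝ) 1 :=
  ⟨le_min zero_le_one (le_max_left _ _), (min_le_left _ _ : min 1 (max 0 (v j)) ≤ 1)⟩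

lemma projCube_eq_self {d : ℕ} (v : EuclideanSpace ℝ (Fin d))
    (h : ∀ j, v j ∈ Set.Icc (0:ℝ) 1) : projCube v = v := by
  ext j
  simp [projCube, max_eq_right (h j).1, min_eq_right (h j).2]

lemma projCube_measurable {d : ℕ} : Measurable (projCube (d := d)) := by
  unfold projCube
  apply (WithLp.measurable_toLp _ _).comp
  apply measurable_pi_iff.mpr
  intro j
  exact Measurable.min measurable_const
    (Measurable.max measurable_const ((measurable_pi_apply j).comp (WithLp.measurable_ofLp _ _)))

lemma projCube_nonexp {d : ℕ} (v y : EuclideanSpace ℝ (Fin d))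
    (hy : ∀ j, y j ∈ Set.Icc (0:ℝ) 1) :
    ‖projCube v - y‖^2 ≤ ‖v - y‖^2 := by
  rw [euclid_normSq, euclid_normSq]
  apply Finset.sum_le_sum
  intro j _
  have h1 : (projCube v - y) j = min 1 (max 0 (v j)) - y j := by rw [PiLp.sub_apply]; rfl
  have h2 : (v - y) j = v j - y j := rfl
  rw [h1, h2, ← sq_abs (min 1 (max 0 (v j)) - y j), ← sq_abs (v j - y j)]
  apply pow_le_pow_left₀ (abs_nonneg _)
  have hyj : min 1 (max 0 (y j)) = y j := by
    rw [max_eq_right (hy j).1, min_eq_right (hy j).2]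
  calc |min 1 (max 0 (v j)) - y j| = |min 1 (max 0 (v j)) - min 1 (max 0 (y j))| := by rw [hyj]
    _ ≤ |v j - y j| := clamp_lip _ _

lemma cube_diff_le {d : ℕ} (a b : EuclideanSpace ℝ (Fin d))
    (ha : ∀ j, a j ∈ Set.Icc (0:ℝ) 1) (hb : ∀ j, b j ∈ Set.Icc (0:ℝ) 1) :
    ‖a - b‖^2 ≤ d := by
  rw [euclid_normSq]
  calc ∑ j, ((a - b) j)^2 ≤ ∑ _j : Fin d, (1:ℝ) := by
        apply Finset.sum_le_sum
        intro j _
        have h2 : (a - b) j = a j - b j := rfl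
        rw [h2, ← sq_abs, ← one_pow 2]
        apply pow_le_pow_left₀ (abs_nonneg _)
        rw [abs_le]
        constructor <;> nlinarith [(ha j).1, (ha j).2, (hb j).1, (hb j).2]
    _ = d := by simp

lemma integrable_brier {X : Type*} [MeasurableSpace X] {d : ℕ}
    (D : Measure (X × EuclideanSpace ℝ (Fin d))) [IsProbabilityMeasure D]
    (hY : ∀ᵐ p ∂D, ∀ j, p.2 j ∈ Set.Icc (0 : ℝ) 1)
    (g : X → EuclideanSpace ℝ (Fin d)) (hg : Measurable g)
    (hgr : ∀ x j, g x j ∈ Set.Icc (0 : ℝ) 1) :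
    Integrable (fun p => ‖g p.1 - p.2‖^2) D := by
  apply Integrable.mono' (integrable_const (d:ℝ))
    ((((hg.comp measurable_fst).sub measurable_snd).norm).pow_const 2).aestronglyMeasurable
  filter_upwards [hY] with p hp
  rw [Real.norm_eq_abs, abs_of_nonneg (by positivity)]
  exact cube_diff_le _ _ (hgr p.1) hp

/-- Per-step empirical Brier decrease with a sufficiently fine grid.
If `m ≥ √(d/(2c))` and the patch satisfies `‖φ‖₂²·μ(E) > c`, then patching with the
rounded offset `φ̃` (each coordinate within `1/(2m)` of `φ`) decreases the Brier score
by more than `c/2`.  In particular, since Brier scores lie in `[0,d]`, any sequence of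
predictors each obtained from the previous one by such a patch has length at most
`2d/c` (with `c = min{β², ηα²/(4d)}` in the paper). -/
theorem per_step_brier_decrease_with_fine_grid
    {X : Type*} [MeasurableSpace X] {d : ℕ}
    (D : Measure (X × EuclideanSpace ℝ (Fin d))) [IsProbabilityMeasure D]
    (hY : ∀ᵐ p ∂D, ∀ j, p.2 j ∈ Set.Icc (0 : ℝ) 1)
    (c : ℝ) (hc : 0 < c)
    (m : ℕ) (hm : 0 < m) (hm_fine : Real.sqrt (d / (2 * c)) ≤ m)
    (f : X → EuclideanSpace ℝ (Fin d)) (hf_meas : Measurable f)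
    (hf_range : ∀ x j, f x j ∈ Set.Icc (0 : ℝ) 1)
    (E : Set X) (hE_meas : MeasurableSet E) (hμE : 0 < (D.map Prod.fst) E)
    (φ : EuclideanSpace ℝ (Fin d))
    (hφ : φ = ((D.map Prod.fst) E).toReal⁻¹ •
      ∫ p in Prod.fst ⁻¹' E, (p.2 - f p.1) ∂D)
    (hbig : ‖φ‖ ^ 2 * ((D.map Prod.fst) E).toReal > c)
    (φt : EuclideanSpace ℝ (Fin d))
    (hφt : ∀ j, |φt j - φ j| ≤ 1 / (2 * m))
    (f' : X → EuclideanSpace ℝ (Fin d))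
    (hf' : ∀ x, f' x = projCube (f x + Set.indicator E (fun _ => φt) x)) :
    ((∫ p, ‖f p.1 - p.2‖ ^ 2 ∂D) - (∫ p, ‖f' p.1 - p.2‖ ^ 2 ∂D) > c / 2)
    ∧ (∀ (T : ℕ) (g : ℕ → X → EuclideanSpace ℝ (Fin d)),
        (∀ t ≤ T, 0 ≤ (∫ p, ‖g t p.1 - p.2‖ ^ 2 ∂D)
          ∧ (∫ p, ‖g t p.1 - p.2‖ ^ 2 ∂D) ≤ d) →
        (∀ t < T, (∫ p, ‖g t p.1 - p.2‖ ^ 2 ∂D)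
          - (∫ p, ‖g (t + 1) p.1 - p.2‖ ^ 2 ∂D) > c / 2) →
        (T : ℝ) ≤ 2 * d / c) := by
  constructor
  · -- Part 1
    set S : Set (X × EuclideanSpace ℝ (Fin d)) := Prod.fst ⁻¹' E with hS_def
    have hS : MeasurableSet S := measurable_fst hE_meas
    have hmap : (D.map Prod.fst) E = D S := Measure.map_apply measurable_fst hE_meas
    set μE : ℝ := ((D.map Prod.fst) E).toReal with hμE_def
    have hμE_pos : 0 < μE := by
      apply ENNReal.toReal_pos hμE.ne'
      rw [hmap]; exact (measure_lt_top D S).ne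
    have hμE_le : μE ≤ 1 := by
      have h1 : (D.map Prod.fst) E ≤ 1 := by rw [hmap]; exact prob_le_one
      calc μE ≤ (1 : ENNReal).toReal := ENNReal.toReal_mono ENNReal.one_ne_top h1
        _ = 1 := ENNReal.toReal_one
    have hf'_range : ∀ x j, f' x j ∈ Set.Icc (0:ℝ) 1 := fun x j => by
      rw [hf' x]; exact projCube_mem _ _
    have hf'_meas : Measurable f' := by
      have heq : f' = fun x => projCube (f x + Set.indicator E (fun _ => φt) x) :=
        funext hf'
      rw [heq]
      exact projCube_measurable.comp
        (hf_meas.add (Measurable.indicator measurable_const hE_meas))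
    have I1 : Integrable (fun p => ‖f p.1 - p.2‖^2) D :=
      integrable_brier D hY f hf_meas hf_range
    have I2 : Integrable (fun p => ‖f' p.1 - p.2‖^2) D :=
      integrable_brier D hY f' hf'_meas hf'_range
    have hnb : ∀ᵐ p ∂D, ‖p.2 - f p.1‖ ≤ Real.sqrt d := by
      filter_upwards [hY] with p hp
      have h1 : ‖p.2 - f p.1‖^2 ≤ (d:ℝ) := cube_diff_le _ _ hp (hf_range p.1)
      calc ‖p.2 - f p.1‖ = Real.sqrt (‖p.2 - f p.1‖^2) := (Real.sqrt_sq (norm_nonneg _)).symm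
        _ ≤ Real.sqrt d := Real.sqrt_le_sqrt h1
    have Ih : Integrable (fun p : X × EuclideanSpace ℝ (Fin d) => p.2 - f p.1) D := by
      apply Integrable.mono' (integrable_const (Real.sqrt d))
        (measurable_snd.sub (hf_meas.comp measurable_fst)).aestronglyMeasurable
      exact hnb
    set g0 : X × EuclideanSpace ℝ (Fin d) → ℝ :=
      fun p => 2 * (⟪φt, p.2 - f p.1⟫) - ‖φt‖^2 with hg0_def
    have Iinner : Integrable (fun p : X × EuclideanSpace ℝ (Fin d) =>
        (⟪φt, p.2 - f p.1⟫ : ℝ)) D := Ih.const_inner φt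
    have Ig : Integrable g0 D := ((Iinner.const_mul 2).sub (integrable_const _))
    have hkey : ∀ᵐ p ∂D, S.indicator g0 p ≤ ‖f p.1 - p.2‖^2 - ‖f' p.1 - p.2‖^2 := by
      filter_upwards [hY] with p hp
      by_cases hx : p.1 ∈ E
      · have hxS : p ∈ S := hx
        rw [Set.indicator_of_mem hxS]
        have hfp : f' p.1 = projCube (f p.1 + φt) := by
          rw [hf' p.1, Set.indicator_of_mem hx]
        have h1 : ‖f' p.1 - p.2‖^2 ≤ ‖(f p.1 + φt) - p.2‖^2 := by
          rw [hfp]; exact projCube_nonexp _ _ hp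
        have h2 : (f p.1 + φt) - p.2 = (f p.1 - p.2) + φt := by abel
        have h3 : ‖(f p.1 - p.2) + φt‖^2
            = ‖f p.1 - p.2‖^2 + 2*(⟪f p.1 - p.2, φt⟫) + ‖φt‖^2 := norm_add_sq_real _ _
        have h4 : (⟪φt, p.2 - f p.1⟫ : ℝ) = -(⟪f p.1 - p.2, φt⟫ : ℝ) := by
          rw [real_inner_comm]
          rw [show p.2 - f p.1 = -(f p.1 - p.2) from by abel, inner_neg_left]
        rw [h2] at h1
        simp only [hg0_def]
        linarith [h1, h3 ▸ h1]
      · have hxS : p ∉ S := hx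
        rw [Set.indicator_of_notMem hxS]
        have hfp : f' p.1 = f p.1 := by
          rw [hf' p.1, Set.indicator_of_notMem hx, add_zero,
            projCube_eq_self _ (hf_range p.1)]
        rw [hfp]
        simp
    have hmono : ∫ p, S.indicator g0 p ∂D
        ≤ ∫ p, (‖f p.1 - p.2‖^2 - ‖f' p.1 - p.2‖^2) ∂D :=
      integral_mono_ae (Ig.indicator hS) (I1.sub I2) hkey
    have hsplit : ∫ p, (‖f p.1 - p.2‖^2 - ‖f' p.1 - p.2‖^2) ∂D
        = (∫ p, ‖f p.1 - p.2‖^2 ∂D) - ∫ p, ‖f' p.1 - p.2‖^2 ∂D := integral_sub I1 I2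
    have hind : ∫ p, S.indicator g0 p ∂D = ∫ p in S, g0 p ∂D := integral_indicator hS
    -- compute the set integral
    have e3 : ∫ p in S, (p.2 - f p.1) ∂D = μE • φ := by
      rw [hφ, smul_smul, mul_inv_cancel₀ hμE_pos.ne', one_smul]
    have e1 : ∫ p in S, g0 p ∂D
        = (∫ p in S, 2 * (⟪φt, p.2 - f p.1⟫ : ℝ) ∂D) - ∫ p in S, ‖φt‖^2 ∂D := by
      apply integral_sub ((Iinner.const_mul 2).integrableOn) ((integrableOn_const_iff).mpr _)
      right; exact measure_lt_top _ _
    have e2 : ∫ p in S, 2 * (⟪φt, p.2 - f p.1⟫ : ℝ) ∂D = 2 * (μE * ⟪φt, φ⟫) := by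
      rw [integral_const_mul, integral_inner Ih.integrableOn φt, e3,
        real_inner_smul_right]
    have e5 : ∫ p in S, ‖φt‖^2 ∂D = μE * ‖φt‖^2 := by
      rw [setIntegral_const, measureReal_def, ← hmap, ← hμE_def, smul_eq_mul]
    have hIS : ∫ p in S, g0 p ∂D = 2 * (μE * ⟪φt, φ⟫) - μE * ‖φt‖^2 := by
      rw [e1, e2, e5]
    -- grid error bound
    have hmpos : (0:ℝ) < m := by exact_mod_cast hm
    have hm2 : (d:ℝ) ≤ 2*c*(m:ℝ)^2 := by
      have h1 : (d:ℝ)/(2*c) ≤ (m:ℝ)^2 := by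
        nlinarith [Real.sq_sqrt (show (0:ℝ) ≤ (d:ℝ)/(2*c) by positivity),
          Real.sqrt_nonneg ((d:ℝ)/(2*c)), hm_fine]
      rw [div_le_iff₀ (by positivity)] at h1; linarith
    have herr : ‖φt - φ‖^2 ≤ c/2 := by
      rw [euclid_normSq]
      have step : ∑ j, ((φt - φ) j)^2 ≤ (d:ℝ) * (1/(2*(m:ℝ)))^2 := by
        calc ∑ j, ((φt - φ) j)^2 ≤ ∑ _j : Fin d, (1/(2*(m:ℝ)))^2 := by
              apply Finset.sum_le_sum
              intro j _
              have hsub : (φt - φ) j = φt j - φ j := rfl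
              rw [hsub, ← sq_abs]
              apply pow_le_pow_left₀ (abs_nonneg _)
              exact hφt j
          _ = (d:ℝ) * (1/(2*(m:ℝ)))^2 := by
              rw [Finset.sum_const, Finset.card_univ, Fintype.card_fin, nsmul_eq_mul]
      refine step.trans ?_
      have hmsq : (0:ℝ) < (m:ℝ)^2 := by positivity
      rw [div_pow, one_pow, mul_one_div, div_le_div_iff₀ (by positivity) (by norm_num)]
      nlinarith [hm2]
    have hid : ‖φt - φ‖^2 = ‖φt‖^2 - 2*(⟪φt, φ⟫ : ℝ) + ‖φ‖^2 := norm_sub_sq_real _ _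
    have hfinal : 2 * (μE * ⟪φt, φ⟫) - μE * ‖φt‖^2
        = μE * ‖φ‖^2 - μE * ‖φt - φ‖^2 := by
      rw [hid]; ring
    have hb1 : μE * ‖φt - φ‖^2 ≤ c/2 := by
      calc μE * ‖φt - φ‖^2 ≤ 1 * ‖φt - φ‖^2 := by
            apply mul_le_mul_of_nonneg_right hμE_le (by positivity)
        _ = ‖φt - φ‖^2 := one_mul _
        _ ≤ c/2 := herr
    have hb2 : c < μE * ‖φ‖^2 := by rw [mul_comm]; exact hbig
    rw [← hsplit]
    calc c/2 = c - c/2 := by ring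
      _ < μE * ‖φ‖^2 - μE * ‖φt - φ‖^2 := by linarith
      _ = ∫ p in S, g0 p ∂D := by rw [hIS, hfinal]
      _ = ∫ p, S.indicator g0 p ∂D := hind.symm
      _ ≤ _ := hmono
  · -- Part 2
    intro T g hbound hdec
    rcases Nat.eq_zero_or_pos T with rfl | hT
    · simp; positivity
    · set B : ℕ → ℝ := fun t => ∫ p, ‖g t p.1 - p.2‖ ^ 2 ∂D with hB
      have tele : ∑ t ∈ Finset.range T, (B t - B (t+1)) = B 0 - B T :=
        Finset.sum_range_sub' B T
      have hs : (T:ℝ) * (c/2) < B 0 - B T := by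
        rw [← tele]
        calc (T:ℝ) * (c/2) = ∑ _t ∈ Finset.range T, (c/2) := by
              rw [Finset.sum_const, Finset.card_range, nsmul_eq_mul]
          _ < ∑ t ∈ Finset.range T, (B t - B (t+1)) := by
              apply Finset.sum_lt_sum_of_nonempty (Finset.nonempty_range_iff.mpr hT.ne')
              intro t ht
              exact hdec t (Finset.mem_range.mp ht)
      have h0 : B 0 ≤ d := (hbound 0 (Nat.zero_le _)).2
      have hT0 : 0 ≤ B T := (hbound T le_rfl).1
      rw [le_div_iff₀ hc]
      linarith
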